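/- Let N, n be positive natural numbers, κ ≥ 0, λ ≥ 0, g : ℝ, A, W, P : Matrix (Fin n) (Fin n) ℝ with P invertible and symmetric, G_i : Fin N → Matrix (Fin n) (Fin n) ℝ with each G_i i symmetric positive semidefinite, G = ∑ i, G_i i, W positive semidefinite, and Q : Matrix (Fin N) (Fin N) ℝ such that for every v : Fin N → ℝ with ∑ i, v i = 0 one has λ * (v ⬝ᵥ v) ≤ v ⬝ᵥ (Q *ᵥ v). Assume ∀ v : Fin n → ℝ, v ⬝ᵥ (G *ᵥ v) ≤ g * (v ⬝ᵥ v). Define M : Matrix (Fin N × Fin n) (Fin N × Fin n) ℝ by M = (1 : Matrix (Fin N) (Fin N) ℝ) ⊗ₖ (G - P⁻¹ * W * P⁻¹) - (2 * N : ℝ) • blockDiag (fun i => G_i i) - (2 * κ) • (Q ⊗ₖ (1 : Matrix (Fin n) (Fin n) ℝ)). Then for every x : Fin N × Fin n → ℝ with ∀ k, ∑ i, x (i,k) = 0, one has x ⬝ᵥ (M *ᵥ x) ≤ (g - 2 * κ * λ) * (x ⬝ᵥ x). -/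

import Mathlib

open Matrix Kronecker BigOperators

/-- Block-diagonal matrix indexed by `Fin N × Fin n` with diagonal blocks `G i`. -/
def blockDiag {N n : ℕ} (G : Fin N → Matrix (Fin n) (Fin n) ℝ) :
    Matrix (Fin N × Fin n) (Fin N × Fin n) ℝ :=
  Matrix.of fun p q => if p.1 = q.1 then G p.1 p.2 q.2 else 0

lemma quadA {N n : ℕ} (B : Matrix (Fin n) (Fin n) ℝ) (x : Fin N × Fin n → ℝ) :
    x ⬝ᵥ (((1 : Matrix (Fin N) (Fin N) ℝ) ⊗ₖ B) *ᵥ x)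
      = ∑ i, (fun k => x (i,k)) ⬝ᵥ (B *ᵥ (fun k => x (i,k))) := by
  simp only [dotProduct, mulVec, Fintype.sum_prod_type, kroneckerMap_apply, Matrix.one_apply,
    dotProduct]
  refine Finset.sum_congr rfl fun i _ => Finset.sum_congr rfl fun k _ => ?_
  congr 1
  rw [Finset.sum_eq_single i]
  · simp [Finset.mul_sum]
  · intro j _ hj; simp [Ne.symm hj]
  · simp

lemma quadC {N n : ℕ} (Q : Matrix (Fin N) (Fin N) ℝ) (x : Fin N × Fin n → ℝ) :
    x ⬝ᵥ ((Q ⊗ₖ (1 : Matrix (Fin n) (Fin n) ℝ)) *ᵥ x)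
      = ∑ k, (fun i => x (i,k)) ⬝ᵥ (Q *ᵥ (fun i => x (i,k))) := by
  simp only [dotProduct, mulVec, Fintype.sum_prod_type, kroneckerMap_apply, Matrix.one_apply]
  rw [Finset.sum_comm]
  refine Finset.sum_congr rfl fun k _ => Finset.sum_congr rfl fun i _ => ?_
  congr 1
  refine Finset.sum_congr rfl fun j _ => ?_
  rw [Finset.sum_eq_single k]
  · simp
  · intro l _ hl; simp [Ne.symm hl]
  · simp

lemma quadB {N n : ℕ} (G : Fin N → Matrix (Fin n) (Fin n) ℝ) (x : Fin N × Fin n → ℝ) :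
    x ⬝ᵥ ((_root_.blockDiag G) *ᵥ x)
      = ∑ i, (fun k => x (i,k)) ⬝ᵥ (G i *ᵥ (fun k => x (i,k))) := by
  simp only [dotProduct, mulVec, Fintype.sum_prod_type, _root_.blockDiag, Matrix.of_apply]
  refine Finset.sum_congr rfl fun i _ => Finset.sum_congr rfl fun k _ => ?_
  congr 1
  rw [Finset.sum_eq_single i]
  · simp
  · intro j _ hj; simp [Ne.symm hj]
  · simp

lemma normsplit {N n : ℕ} (x : Fin N × Fin n → ℝ) :
    x ⬝ᵥ x = ∑ i, (fun k => x (i,k)) ⬝ᵥ (fun k => x (i,k)) := by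
  simp [dotProduct, Fintype.sum_prod_type]

lemma normsplit' {N n : ℕ} (x : Fin N × Fin n → ℝ) :
    x ⬝ᵥ x = ∑ k, (fun i => x (i,k)) ⬝ᵥ (fun i => x (i,k)) := by
  simp only [dotProduct, Fintype.sum_prod_type]
  exact Finset.sum_comm

theorem stmt6 {N n : ℕ} (hN : 0 < N) (hn : 0 < n)
    (κ : ℝ) (hκ : 0 ≤ κ) (lam : ℝ) (hlam : 0 ≤ lam) (g : ℝ)
    (A W P : Matrix (Fin n) (Fin n) ℝ) (hP : IsUnit P) (hPsym : Pᵀ = P)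
    (G_i : Fin N → Matrix (Fin n) (Fin n) ℝ)
    (hGisym : ∀ i, (G_i i)ᵀ = G_i i) (hGipsd : ∀ i, (G_i i).PosSemidef)
    (G : Matrix (Fin n) (Fin n) ℝ) (hG : G = ∑ i, G_i i)
    (hW : W.PosSemidef)
    (Q : Matrix (Fin N) (Fin N) ℝ)
    (hQ : ∀ v : Fin N → ℝ, (∑ i, v i) = 0 → lam * (v ⬝ᵥ v) ≤ v ⬝ᵥ (Q *ᵥ v))
    (hg : ∀ v : Fin n → ℝ, v ⬝ᵥ (G *ᵥ v) ≤ g * (v ⬝ᵥ v))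
    (M : Matrix (Fin N × Fin n) (Fin N × Fin n) ℝ)
    (hM : M = (1 : Matrix (Fin N) (Fin N) ℝ) ⊗ₖ (G - P⁻¹ * W * P⁻¹)
        - (2 * N : ℝ) • blockDiag (fun i => G_i i)
        - (2 * κ) • (Q ⊗ₖ (1 : Matrix (Fin n) (Fin n) ℝ))) :
    ∀ x : Fin N × Fin n → ℝ, (∀ k, (∑ i, x (i, k)) = 0) →
      x ⬝ᵥ (M *ᵥ x) ≤ (g - 2 * κ * lam) * (x ⬝ᵥ x) := by
  intro x hx
  subst hM
  rw [sub_mulVec, sub_mulVec, dotProduct_sub, dotProduct_sub,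
      smul_mulVec, smul_mulVec, dotProduct_smul, dotProduct_smul,
      smul_eq_mul, smul_eq_mul]
  have hPinv : P⁻¹ᵀ = P⁻¹ := by rw [Matrix.transpose_nonsing_inv, hPsym]
  have hPH : (P⁻¹)ᴴ = P⁻¹ := by
    ext i j
    simp only [conjTranspose_apply, star_trivial]
    exact congrFun (congrFun hPinv i) j
  have hWP : (P⁻¹ * W * P⁻¹).PosSemidef := by
    have h := hW.conjTranspose_mul_mul_same P⁻¹
    rwa [hPH] at h
  -- bound A
  have hA : x ⬝ᵥ (((1 : Matrix (Fin N) (Fin N) ℝ) ⊗ₖ (G - P⁻¹ * W * P⁻¹)) *ᵥ x)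
      ≤ g * (x ⬝ᵥ x) := by
    rw [quadA, normsplit x, Finset.mul_sum]
    apply Finset.sum_le_sum
    intro i _
    set v : Fin n → ℝ := fun k => x (i,k)
    have hW0 : 0 ≤ v ⬝ᵥ ((P⁻¹ * W * P⁻¹) *ᵥ v) := by simpa using hWP.dotProduct_mulVec_nonneg v
    rw [sub_mulVec, dotProduct_sub]
    have := hg v
    linarith
  -- bound B
  have hB : 0 ≤ x ⬝ᵥ ((_root_.blockDiag fun i => G_i i) *ᵥ x) := by
    rw [quadB]
    exact Finset.sum_nonneg fun i _ => by simpa using (hGipsd i).dotProduct_mulVec_nonneg (fun k => x (i,k))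
  -- bound C
  have hC : lam * (x ⬝ᵥ x) ≤ x ⬝ᵥ ((Q ⊗ₖ (1 : Matrix (Fin n) (Fin n) ℝ)) *ᵥ x) := by
    rw [quadC, normsplit' x, Finset.mul_sum]
    exact Finset.sum_le_sum fun k _ => hQ (fun i => x (i,k)) (hx k)
  have hNb : 0 ≤ (2 * (N:ℝ)) * (x ⬝ᵥ ((_root_.blockDiag fun i => G_i i) *ᵥ x)) :=
    mul_nonneg (by positivity) hB
  have hκC : 2 * κ * (lam * (x ⬝ᵥ x)) ≤ 2 * κ * (x ⬝ᵥ ((Q ⊗ₖ (1 : Matrix (Fin n) (Fin n) ℝ)) *ᵥ x)) :=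
    mul_le_mul_of_nonneg_left hC (by positivity)
  nlinarith [hA, hNb, hκC]
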